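/- Let U ⊆ ℝⁿ be an open set closed under multiplication by positive scalars, let ϑ ∈ ℝ, and let F : ℝⁿ → ℝ satisfy F(t • x) = F(x) − ϑ * log t for all x ∈ U and all t > 0. If F is three times continuously differentiable on U, then for every x ∈ U and all h, h' ∈ ℝⁿ, the third derivative satisfies D³F(x)[x, h, h'] = −2 · D²F(x)[h, h']. -/

import Mathlib

open Set

/-- For a ϑ-logarithmically homogeneous `F`: `D³F(x)[x, h, h'] = -2 · D²F(x)[h, h']`. -/
theorem stmt_3 (n : ℕ) (U : Set (EuclideanSpace ℝ (Fin n)))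
    (hU : IsOpen U) (hcone : ∀ x ∈ U, ∀ t : ℝ, 0 < t → t • x ∈ U)
    (ϑ : ℝ) (F : EuclideanSpace ℝ (Fin n) → ℝ)
    (hhom : ∀ x ∈ U, ∀ t : ℝ, 0 < t → F (t • x) = F x - ϑ * Real.log t)
    (hF : ContDiffOn ℝ 3 F U) :
    ∀ x ∈ U, ∀ h h' : EuclideanSpace ℝ (Fin n),
      iteratedFDerivWithin ℝ 3 F U x ![x, h, h']
        = -2 * iteratedFDerivWithin ℝ 2 F U x ![h, h'] := by
  have hud : UniqueDiffOn ℝ U := hU.uniqueDiffOn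
  let E := EuclideanSpace ℝ (Fin n)
  set G := iteratedFDerivWithin ℝ 2 F U with hG
  -- scaling identity for the second derivative
  have key : ∀ t : ℝ, 0 < t → ∀ y ∈ U, ∀ h h' : E,
      G (t • y) ![h, h'] = t⁻¹ * t⁻¹ * G y ![h, h'] := by
    intro t ht y hy h h'
    have htne : t ≠ 0 := ne_of_gt ht
    let e : E ≃L[ℝ] E := (LinearEquiv.smulOfNeZero ℝ E t htne).toContinuousLinearEquiv
    have he : ∀ z : E, e z = t • z := fun z => rfl
    have hpre : e ⁻¹' U = U := by
      ext z
      constructor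
      · intro hz
        have : t • z ∈ U := hz
        have := hcone _ this t⁻¹ (by positivity)
        rwa [smul_smul, inv_mul_cancel₀ htne, one_smul] at this
      · intro hz; exact hcone _ hz t ht
    have hcomp := e.iteratedFDerivWithin_comp_right F hud
      (x := y) (by rw [he]; exact hcone _ hy t ht) 2
    rw [hpre] at hcomp
    -- `F ∘ e` agrees with `fun z => F z - ϑ * Real.log t` on `U`
    have hEq : Set.EqOn (F ∘ e) (fun z => F z + -(ϑ * Real.log t)) U := by
      intro z hz
      show F (e z) = _
      rw [he, hhom z hz t ht, sub_eq_add_neg]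
    have h1 : iteratedFDerivWithin ℝ 2 (F ∘ e) U y
        = iteratedFDerivWithin ℝ 2 (fun z => F z + -(ϑ * Real.log t)) U y :=
      iteratedFDerivWithin_congr hEq hy 2
    have h2 : iteratedFDerivWithin ℝ 2 (fun z => F z + -(ϑ * Real.log t)) U y ![h, h']
        = G y ![h, h'] := by
      have := iteratedFDerivWithin_add_apply' (i := 2) (f := F)
        (g := fun _ : E => -(ϑ * Real.log t)) ((hF.of_le (by norm_num : ((2:ℕ) : WithTop ℕ∞) ≤ 3)) y hy)
        contDiffWithinAt_const hud hy
      rw [this, ContinuousMultilinearMap.add_apply,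
        iteratedFDerivWithin_const_of_ne (n := 2) (by norm_num) _ U]
      simp [hG]
    -- right hand side of hcomp applied to `![h, h']`
    have h3 : (iteratedFDerivWithin ℝ 2 F U (e y)).compContinuousLinearMap
        (fun _ => (e : E →L[ℝ] E)) ![h, h'] = t * t * G (t • y) ![h, h'] := by
      rw [ContinuousMultilinearMap.compContinuousLinearMap_apply]
      have hv : (fun i => (e : E →L[ℝ] E) (![h, h'] i))
          = fun i => t • (![h, h'] i) := by
        funext i; exact he _
      rw [hv]
      have := (iteratedFDerivWithin ℝ 2 F U (e y)).map_smul_univ (fun _ => t) ![h, h']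
      rw [this]
      have hey : e y = t • y := he y
      rw [hey]
      simp only [hG, smul_eq_mul, Finset.prod_const, Finset.card_univ, Fintype.card_fin]
      ring
    have := congrArg (fun (P : ContinuousMultilinearMap ℝ (fun _ : Fin 2 => E) ℝ)
      => P ![h, h']) hcomp
    rw [h1] at this
    rw [h2, h3] at this
    field_simp at this ⊢
    rw [this]
  intro x hx h h'
  -- differentiability of G at x
  have hGdiff : DifferentiableOn ℝ G U :=
    hF.differentiableOn_iteratedFDerivWithin (by norm_num : ((2:ℕ) : WithTop ℕ∞) < 3) hud
  have hGdx : DifferentiableAt ℝ G x :=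
    (hGdiff x hx).differentiableAt (hU.mem_nhds hx)
  set A := fderiv ℝ G x with hA
  have hGA : HasFDerivAt G A x := hGdx.hasFDerivAt
  -- curve t ↦ t • x
  have hc : HasDerivAt (fun t : ℝ => t • x) x 1 := by
    simpa using (hasDerivAt_id (1 : ℝ)).smul_const x
  have hcomp : HasDerivAt (fun t : ℝ => G (t • x)) (A x) 1 := by
    have : HasFDerivAt G A ((1 : ℝ) • x) := by rwa [one_smul]
    exact this.comp_hasDerivAt 1 hc
  -- evaluate at ![h, h']
  let L := ContinuousMultilinearMap.apply ℝ (fun _ : Fin 2 => E) ℝ ![h, h']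
  have heval : HasDerivAt (fun t : ℝ => G (t • x) ![h, h']) (A x ![h, h']) 1 :=
    L.hasFDerivAt.comp_hasDerivAt 1 hcomp
  -- the same function equals t⁻¹ * t⁻¹ * K near 1
  set K := G x ![h, h'] with hK
  have hpsi : HasDerivAt (fun t : ℝ => t⁻¹ * t⁻¹ * K) (-2 * K) 1 := by
    have h1 : HasDerivAt (fun t : ℝ => t⁻¹) (-1) 1 := by
      have := hasDerivAt_inv (one_ne_zero (α := ℝ))
      norm_num at this
      exact this
    have h2 := (h1.mul h1).mul_const K
    exact h2.congr_deriv (by norm_num)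
  have hev : (fun t : ℝ => G (t • x) ![h, h'])
      =ᶠ[nhds (1 : ℝ)] fun t => t⁻¹ * t⁻¹ * K := by
    filter_upwards [eventually_gt_nhds (by norm_num : (0:ℝ) < 1)] with t ht
    exact key t ht x hx h h'
  have hderiv_eq : A x ![h, h'] = -2 * K :=
    (heval.congr_of_eventuallyEq hev.symm).unique hpsi
  -- relate to the third derivative
  have h3 : iteratedFDerivWithin ℝ 3 F U x ![x, h, h']
      = (fderivWithin ℝ G U x x) ![h, h'] := by
    have := iteratedFDerivWithin_succ_apply_left (𝕜 := ℝ) (f := F) (s := U)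
      (x := x) (n := 2) ![x, h, h']
    have ht0 : ![x, h, h'] 0 = x := rfl
    have htt : Fin.tail ![x, h, h'] = ![h, h'] := by
      funext i; fin_cases i <;> rfl
    rw [this, ht0, htt]
  rw [h3, fderivWithin_of_isOpen hU hx, ← hA, hderiv_eq, hK]
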